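/- Let a DeFG without classical variables be given. Let {m_{j→a}, m_{a→j} : S_j × S_j → ℂ}_{(j,a)∈E} be messages such that each message, viewed as an S_j×S_j matrix, is positive semidefinite. Define Z_a := ∑_{s_{∂a}, s̃_{∂a}} f_a(s_{∂a}, s̃_{∂a})·∏_{j∈∂a} m_{j→a}(s_j, s̃_j) for a ∈ F, Z_j := ∑_{s_j, s̃_j} ∏_{a∈∂j} m_{a→j}(s_j, s̃_j) for j ∈ V, Z_{j,a} := ∑_{s_j, s̃_j} m_{j→a}(s_j, s̃_j)·m_{a→j}(s_j, s̃_j) for (j,a) ∈ E, and the induced partition sum Z_induced := (∏_{a∈F} Z_a · ∏_{j∈V} Z_j) / ∏_{(j,a)∈E} Z_{j,a}. Then: (i) if Z_{j,a} ≠ 0 for all (j,a) ∈ E, then Z_induced is a nonnegative real number; (ii) if moreover Z_a ≠ 0 and Z_j ≠ 0 for all a ∈ F and j ∈ V, then the following are equivalent: (A) for every (k,c) ∈ E and every η : S_k × S_k → ℂ whose matrix is positive semidefinite, the real directional derivatives (d/dh)|_{h=0} Z_induced evaluated with m_{c→k} replaced by m_{c→k} + h·η, and with m_{k→c} replaced by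 m_{k→c} + h·η (all other messages fixed), both vanish; (B) the messages are a BP fixed point: for every (k,c) ∈ E there exist positive real constants such that m_{k→c}(s_k, s̃_k) ∝ ∏_{a∈∂k∖{c}} m_{a→k}(s_k, s̃_k) and m_{c→k}(s_k, s̃_k) ∝ ∑_{s_{∂c∖{k}}, s̃_{∂c∖{k}}} f_c(s_{∂c}, s̃_{∂c})·∏_{j∈∂c∖{k}} m_{j→c}(s_j, s̃_j) for all s_k, s̃_k. -/

import Mathlib

set_option linter.unusedSectionVars false
set_option maxHeartbeats 1000000


open Finset
open scoped ComplexOrder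

section Aux

lemma hasDerivAt_affine (a b : ℂ) : HasDerivAt (fun t : ℝ => a + (t : ℂ) * b) b 0 := by
  have h1 : HasDerivAt (fun t : ℝ => (t : ℂ)) 1 0 := by
    simpa using (hasDerivAt_id (0:ℝ)).ofReal_comp
  simpa using (h1.mul_const b).const_add a

lemma deriv_ratio (Cc Dd zN zD α β : ℂ) (hzD : zD ≠ 0) (hDd : Dd ≠ 0) :
    deriv (fun t : ℝ => (Cc * (zN + (t : ℂ) * α)) / (Dd * (zD + (t : ℂ) * β))) 0
      = (Cc * α * (Dd * zD) - Cc * zN * (Dd * β)) / (Dd * zD) ^ 2 := by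
  have hnum : HasDerivAt (fun t : ℝ => Cc * (zN + (t : ℂ) * α)) (Cc * α) 0 := by
    simpa using (hasDerivAt_affine zN α).const_mul Cc
  have hden : HasDerivAt (fun t : ℝ => Dd * (zD + (t : ℂ) * β)) (Dd * β) 0 := by
    simpa using (hasDerivAt_affine zD β).const_mul Dd
  have h := (hnum.div hden (by simpa using mul_ne_zero hDd hzD)).deriv
  simpa [Pi.div_def] using h


noncomputable def cpair {n : Type} [Fintype n] (η X : n → n → ℂ) : ℂ :=
  ∑ s, ∑ t, η s t * X s t

lemma sum_swap3 {a b c : Type} [Fintype a] [Fintype b] [Fintype c] (h : a → b → c → ℂ) :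
    ∑ x, ∑ y, ∑ z, h x y z = ∑ z, ∑ x, ∑ y, h x y z := by
  calc ∑ x, ∑ y, ∑ z, h x y z = ∑ x, ∑ z, ∑ y, h x y z :=
        Finset.sum_congr rfl fun x _ => Finset.sum_comm
    _ = ∑ z, ∑ x, ∑ y, h x y z := Finset.sum_comm

lemma quad_rep {n R : Type} [Fintype n] [Fintype R] (g : R → n → ℂ) (x : n → ℂ) :
    ∑ s, ∑ t, (starRingEnd ℂ) (x s) * ((∑ r, (starRingEnd ℂ) (g r s) * g r t) * x t)
      = ∑ r, star (∑ t, g r t * x t) * (∑ t, g r t * x t) := by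
  have hz : ∀ r : R, star (∑ t, g r t * x t) * (∑ t, g r t * x t)
      = ∑ s, ∑ t, (starRingEnd ℂ) (x s) * (((starRingEnd ℂ) (g r s) * g r t) * x t) := by
    intro r
    rw [Complex.star_def, map_sum, Finset.sum_mul]
    refine Finset.sum_congr rfl fun s _ => ?_
    rw [Finset.mul_sum]
    refine Finset.sum_congr rfl fun t _ => ?_
    simp only [map_mul]
    ring
  calc ∑ s, ∑ t, (starRingEnd ℂ) (x s) * ((∑ r, (starRingEnd ℂ) (g r s) * g r t) * x t)
      = ∑ s, ∑ t, ∑ r, (starRingEnd ℂ) (x s) * (((starRingEnd ℂ) (g r s) * g r t) * x t) := by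
        simp only [Finset.sum_mul, Finset.mul_sum]
    _ = ∑ r, ∑ s, ∑ t, (starRingEnd ℂ) (x s) * (((starRingEnd ℂ) (g r s) * g r t) * x t) :=
        sum_swap3 _
    _ = _ := Finset.sum_congr rfl fun r _ => (hz r).symm

lemma psd_of_rep {n R : Type} [Fintype n] [Fintype R] {M : n → n → ℂ} (g : R → n → ℂ)
    (h : ∀ s t, M s t = ∑ r, (starRingEnd ℂ) (g r s) * g r t) :
    Matrix.PosSemidef (Matrix.of M) := by
  rw [Matrix.posSemidef_iff_dotProduct_mulVec]
  constructor
  · ext s t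
    simp only [Matrix.conjTranspose_apply, Matrix.of_apply, h, star_sum, star_mul',
      Complex.star_def]
    simp [mul_comm]
  · intro x
    have hd : dotProduct (star x) ((Matrix.of M).mulVec x)
        = ∑ s, ∑ t, (starRingEnd ℂ) (x s) * ((∑ r, (starRingEnd ℂ) (g r s) * g r t) * x t) := by
      simp only [dotProduct, Matrix.mulVec, dotProduct, Matrix.of_apply,
        Pi.star_apply, Complex.star_def, Finset.mul_sum, h]
    rw [hd, quad_rep]
    exact Finset.sum_nonneg fun r _ => star_mul_self_nonneg _

open scoped MatrixOrder Matrix.Norms.L2Operator in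
lemma rep_of_psd {n : Type} [Fintype n] [DecidableEq n] {M : n → n → ℂ}
    (h : Matrix.PosSemidef (Matrix.of M)) :
    ∃ g : n → n → ℂ, ∀ s t, M s t = ∑ r, (starRingEnd ℂ) (g r s) * g r t := by
  obtain ⟨B, hB⟩ := CStarAlgebra.nonneg_iff_eq_star_mul_self.mp h.nonneg
  refine ⟨fun r s => B r s, fun s t => ?_⟩
  have := congrFun (congrFun hB s) t
  simpa [Matrix.mul_apply, Matrix.conjTranspose_apply, Complex.star_def, Matrix.star_eq_conjTranspose] using this

lemma sum_entries_rep_nonneg {n R : Type} [Fintype n] [Fintype R] (g : R → n → ℂ) :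
    0 ≤ ∑ s, ∑ t, ∑ r, (starRingEnd ℂ) (g r s) * g r t := by
  have := quad_rep g (fun _ => 1)
  simp only [map_one, one_mul, mul_one] at this
  rw [this]
  exact Finset.sum_nonneg fun r _ => star_mul_self_nonneg _


lemma rep_mul {n R1 R2 : Type} [Fintype n] [Fintype R1] [Fintype R2]
    (g1 : R1 → n → ℂ) (g2 : R2 → n → ℂ) (s t : n) :
    (∑ r, (starRingEnd ℂ) (g1 r s) * g1 r t) * (∑ r, (starRingEnd ℂ) (g2 r s) * g2 r t)
      = ∑ r : R1 × R2, (starRingEnd ℂ) (g1 r.1 s * g2 r.2 s) * (g1 r.1 t * g2 r.2 t) := by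
  rw [Fintype.sum_mul_sum, Fintype.sum_prod_type]
  refine Finset.sum_congr rfl fun r1 _ => Finset.sum_congr rfl fun r2 _ => ?_
  simp only [map_mul]; ring

lemma rep_pi {ι : Type} [Fintype ι] [DecidableEq ι] {n : ι → Type} [∀ i, Fintype (n i)]
    (g : ∀ i, n i → n i → ℂ) (s t : ∀ i, n i) :
    ∏ i, ∑ r, (starRingEnd ℂ) (g i r (s i)) * g i r (t i)
      = ∑ r : ∀ i, n i, (starRingEnd ℂ) (∏ i, g i (r i) (s i)) * ∏ i, g i (r i) (t i) := by
  rw [Fintype.prod_sum]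
  refine Finset.sum_congr rfl fun r _ => ?_
  rw [Finset.prod_mul_distrib, map_prod]

lemma rep_pi_had {ι n : Type} [Fintype ι] [DecidableEq ι] [Fintype n]
    (g : ι → n → n → ℂ) (s t : n) :
    ∏ i, ∑ r, (starRingEnd ℂ) (g i r s) * g i r t
      = ∑ r : ι → n, (starRingEnd ℂ) (∏ i, g i (r i) s) * ∏ i, g i (r i) t := by
  rw [Fintype.prod_sum]
  refine Finset.sum_congr rfl fun r _ => ?_
  rw [Finset.prod_mul_distrib, map_prod]

lemma psd_rank_one {n : Type} [Fintype n] (v : n → ℂ) :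
    Matrix.PosSemidef (Matrix.of (fun s t => v s * (starRingEnd ℂ) (v t))) :=
  psd_of_rep (R := Unit) (fun _ z => (starRingEnd ℂ) (v z)) (fun s t => by
    simp [mul_comm])

lemma sum_one_aux {n : Type} [Fintype n] [DecidableEq n] (X : n → n → ℂ) (s0 : n) :
    cpair (fun s t => (if s = s0 then (1:ℂ) else 0) * (starRingEnd ℂ) (if t = s0 then (1:ℂ) else 0)) X
      = X s0 s0 := by
  unfold cpair
  simp [ite_mul, Finset.sum_ite_eq']

lemma sum_two_aux {n : Type} [Fintype n] [DecidableEq n] (X : n → n → ℂ) {s0 t0 : n}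
    (hst : s0 ≠ t0) (a b : ℂ) :
    cpair (fun s t => (if s = s0 then a else if s = t0 then b else 0) *
        (starRingEnd ℂ) (if t = s0 then a else if t = t0 then b else 0)) X
      = a * (starRingEnd ℂ) a * X s0 s0 + a * (starRingEnd ℂ) b * X s0 t0
        + b * (starRingEnd ℂ) a * X t0 s0 + b * (starRingEnd ℂ) b * X t0 t0 := by
  unfold cpair
  have hsub : ({s0, t0} : Finset n) ⊆ univ := Finset.subset_univ _
  rw [← Finset.sum_subset hsub (fun x _ hx => ?_), Finset.sum_pair hst]
  · have hin : ∀ s : n, ∑ t, ((if s = s0 then a else if s = t0 then b else 0) *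
        (starRingEnd ℂ) (if t = s0 then a else if t = t0 then b else 0)) * X s t
        = ((if s = s0 then a else if s = t0 then b else 0) * (starRingEnd ℂ) a) * X s s0
          + ((if s = s0 then a else if s = t0 then b else 0) * (starRingEnd ℂ) b) * X s t0 := by
      intro s
      rw [← Finset.sum_subset hsub (fun x _ hx => ?_), Finset.sum_pair hst]
      · simp [hst, hst.symm]
      · have h1 : x ≠ s0 := fun hc => hx (by simp [hc])
        have h2 : x ≠ t0 := fun hc => hx (by simp [hc])
        simp [h1, h2]
    rw [hin s0, hin t0]
    simp [hst, hst.symm]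
    ring
  · have h1 : x ≠ s0 := fun hc => hx (by simp [hc])
    have h2 : x ≠ t0 := fun hc => hx (by simp [hc])
    simp [h1, h2]

lemma cpair_forall_zero {n : Type} [Fintype n] [DecidableEq n] {X : n → n → ℂ}
    (hX : ∀ η : n → n → ℂ, Matrix.PosSemidef (Matrix.of η) → cpair η X = 0) :
    ∀ s t, X s t = 0 := by
  have key : ∀ v : n → ℂ, cpair (fun s t => v s * (starRingEnd ℂ) (v t)) X = 0 :=
    fun v => hX _ (psd_rank_one v)
  have diag : ∀ s0 : n, X s0 s0 = 0 := by
    intro s0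
    have := key (fun z => if z = s0 then (1:ℂ) else 0)
    rwa [sum_one_aux X s0] at this
  intro s0 t0
  by_cases hst : s0 = t0
  · exact hst ▸ diag s0
  · have e1 := key (fun z => if z = s0 then (1:ℂ) else if z = t0 then 1 else 0)
    have e2 := key (fun z => if z = s0 then (1:ℂ) else if z = t0 then Complex.I else 0)
    rw [sum_two_aux X hst 1 1] at e1
    rw [sum_two_aux X hst 1 Complex.I] at e2
    simp only [map_one, one_mul, mul_one, diag s0, diag t0, Complex.conj_I] at e1 e2
    have h2I : (-2 * Complex.I) * X s0 t0 = 0 := by linear_combination e2 - Complex.I * e1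
    have hne : (-2 * Complex.I) ≠ 0 := by
      simp [Complex.I_ne_zero]
    exact (mul_eq_zero.mp h2I).resolve_left hne

lemma cpair_lin {n : Type} [Fintype n] (η X Y : n → n → ℂ) (a b : ℂ) :
    cpair η (fun s t => a * X s t - b * Y s t) = a * cpair η X - b * cpair η Y := by
  unfold cpair
  rw [Finset.mul_sum, Finset.mul_sum, ← Finset.sum_sub_distrib]
  refine Finset.sum_congr rfl fun s _ => ?_
  rw [Finset.mul_sum, Finset.mul_sum, ← Finset.sum_sub_distrib]
  refine Finset.sum_congr rfl fun t _ => ?_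
  ring

end Aux

section Aux2
variable {V F : Type} [Fintype V] [Fintype F] [DecidableEq V] [DecidableEq F]

lemma cmul_nonneg {a b : ℂ} (ha : 0 ≤ a) (hb : 0 ≤ b) : 0 ≤ a * b := by
  rw [Complex.nonneg_iff] at *
  constructor
  · simp only [Complex.mul_re, ← ha.2, ← hb.2, mul_zero, sub_zero]
    exact mul_nonneg ha.1 hb.1
  · simp [Complex.mul_im, ← ha.2, ← hb.2]

lemma cdiv_nonneg {a b : ℂ} (ha : 0 ≤ a) (hb : 0 ≤ b) : 0 ≤ a / b := by
  rw [Complex.nonneg_iff] at ha hb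
  have h1 : a = (a.re : ℂ) := Complex.ext rfl (by simp [← ha.2])
  have h2 : b = (b.re : ℂ) := Complex.ext rfl (by simp [← hb.2])
  rw [h1, h2, ← Complex.ofReal_div]
  exact Complex.zero_le_real.mpr (div_nonneg ha.1 hb.1)

lemma cprod_nonneg {ι : Type} {s : Finset ι} {g : ι → ℂ} (h : ∀ i ∈ s, 0 ≤ g i) :
    0 ≤ ∏ i ∈ s, g i :=
  Finset.prod_induction g (0 ≤ ·) (fun _ _ => cmul_nonneg)
    (Complex.nonneg_iff.mpr (by norm_num)) h

lemma cpos_re {z : ℂ} (hz : 0 ≤ z) (h0 : z ≠ 0) : 0 < z.re := by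
  rw [Complex.nonneg_iff] at hz
  rcases lt_or_eq_of_le hz.1 with h | h
  · exact h
  · exact absurd (by apply Complex.ext <;> simp [← h, ← hz.2]) h0

lemma c_eq_re {z : ℂ} (hz : 0 ≤ z) : z = (z.re : ℂ) := by
  rw [Complex.nonneg_iff] at hz
  exact Complex.ext rfl (by simp [← hz.2])

end Aux2

section

variable {V F : Type} [Fintype V] [Fintype F] [DecidableEq V] [DecidableEq F]

/-- The type of a family of messages (one per edge) on a DeFG without classical
variables; each message `m j a h : S j → S j → ℂ` is a square matrix on `S j`. -/
abbrev DeFGMsg (E : Finset (V × F)) (S : V → Type) : Type :=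
  ∀ (j : V) (a : F), (j, a) ∈ E → S j → S j → ℂ

variable (E : Finset (V × F)) (S : V → Type) [∀ j, Fintype (S j)] [∀ j, DecidableEq (S j)]

/-- `Z_a`: the local partition sum at a factor `a`, computed from the incoming
variable-to-factor messages `mv`. -/
noncomputable def Zfac
    (f : ∀ a : F, (∀ j : {j : V // (j, a) ∈ E}, S j.1) →
                  (∀ j : {j : V // (j, a) ∈ E}, S j.1) → ℂ)
    (mv : DeFGMsg E S) (a : F) : ℂ :=
  ∑ s : ∀ j : {j : V // (j, a) ∈ E}, S j.1,
    ∑ st : ∀ j : {j : V // (j, a) ∈ E}, S j.1,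
      f a s st * ∏ j : {j : V // (j, a) ∈ E}, mv j.1 a j.2 (s j) (st j)

/-- `Z_j`: the local partition sum at a variable `j`, computed from the incoming
factor-to-variable messages `mf`. -/
noncomputable def Zvar (mf : DeFGMsg E S) (j : V) : ℂ :=
  ∑ sj : S j, ∑ stj : S j, ∏ a : {a : F // (j, a) ∈ E}, mf j a.1 a.2 sj stj

/-- `Z_{j,a}`: the local partition sum at an edge `(j,a)`. -/
noncomputable def Zedge (mv mf : DeFGMsg E S) (j : V) (a : F) (h : (j, a) ∈ E) : ℂ :=
  ∑ sj : S j, ∑ stj : S j, mv j a h sj stj * mf j a h sj stj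

/-- The induced partition sum of a DeFG at a family of messages. -/
noncomputable def Zinduced
    (f : ∀ a : F, (∀ j : {j : V // (j, a) ∈ E}, S j.1) →
                  (∀ j : {j : V // (j, a) ∈ E}, S j.1) → ℂ)
    (mv mf : DeFGMsg E S) : ℂ :=
  ((∏ a : F, Zfac E S f mv a) * ∏ j : V, Zvar E S mf j) /
    ∏ e : {p : V × F // p ∈ E}, Zedge E S mv mf e.1.1 e.1.2 e.2

/-- Replace the single message at edge `(k,c)` by `m_{k,c} + t·η` (all other messages
unchanged). -/
noncomputable def updMsg (m : DeFGMsg E S) (k : V) (c : F) (η : S k → S k → ℂ) (t : ℝ) :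
    DeFGMsg E S :=
  fun j a h sj stj =>
    if hj : j = k ∧ a = c then
      m j a h sj stj +
        (t : ℂ) * η (cast (congrArg S hj.1) sj) (cast (congrArg S hj.1) stj)
    else m j a h sj stj

lemma Zedge_nonneg (mv mf : DeFGMsg E S)
    (hmv : ∀ (j : V) (a : F) (h : (j, a) ∈ E), Matrix.PosSemidef (Matrix.of (mv j a h)))
    (hmf : ∀ (j : V) (a : F) (h : (j, a) ∈ E), Matrix.PosSemidef (Matrix.of (mf j a h)))
    (j : V) (a : F) (h : (j, a) ∈ E) : 0 ≤ Zedge E S mv mf j a h := by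
  obtain ⟨g1, hg1⟩ := rep_of_psd (hmv j a h)
  obtain ⟨g2, hg2⟩ := rep_of_psd (hmf j a h)
  have hrw : Zedge E S mv mf j a h
      = ∑ s, ∑ t, ∑ r : S j × S j,
          (starRingEnd ℂ) (g1 r.1 s * g2 r.2 s) * (g1 r.1 t * g2 r.2 t) := by
    unfold Zedge
    exact Finset.sum_congr rfl fun s _ => Finset.sum_congr rfl fun t _ => by
      rw [hg1, hg2, rep_mul]
  rw [hrw]
  exact sum_entries_rep_nonneg _

lemma Zvar_nonneg (mf : DeFGMsg E S)
    (hmf : ∀ (j : V) (a : F) (h : (j, a) ∈ E), Matrix.PosSemidef (Matrix.of (mf j a h)))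
    (j : V) : 0 ≤ Zvar E S mf j := by
  choose g hg using fun a : {a : F // (j, a) ∈ E} => rep_of_psd (hmf j a.1 a.2)
  have hrw : Zvar E S mf j
      = ∑ s, ∑ t, ∑ r : {a : F // (j, a) ∈ E} → S j,
          (starRingEnd ℂ) (∏ a, g a (r a) s) * ∏ a, g a (r a) t := by
    unfold Zvar
    refine Finset.sum_congr rfl fun s _ => Finset.sum_congr rfl fun t _ => ?_
    rw [show ∏ a : {a : F // (j, a) ∈ E}, mf j a.1 a.2 s t
        = ∏ a : {a : F // (j, a) ∈ E}, ∑ r, (starRingEnd ℂ) (g a r s) * g a r t from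
      Finset.prod_congr rfl fun a _ => hg a s t, rep_pi_had]
  rw [hrw]
  exact sum_entries_rep_nonneg _

lemma Zfac_nonneg
    (f : ∀ a : F, (∀ j : {j : V // (j, a) ∈ E}, S j.1) →
                  (∀ j : {j : V // (j, a) ∈ E}, S j.1) → ℂ)
    (hPSD : ∀ a : F, Matrix.PosSemidef (Matrix.of fun s st => f a s st))
    (mv : DeFGMsg E S)
    (hmv : ∀ (j : V) (a : F) (h : (j, a) ∈ E), Matrix.PosSemidef (Matrix.of (mv j a h)))
    (a : F) : 0 ≤ Zfac E S f mv a := by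
  obtain ⟨gf, hgf⟩ := rep_of_psd (hPSD a)
  choose g hg using fun j : {j : V // (j, a) ∈ E} => rep_of_psd (hmv j.1 a j.2)
  have hrw : Zfac E S f mv a
      = ∑ s, ∑ t, ∑ r : (∀ j : {j : V // (j, a) ∈ E}, S j.1) × (∀ j : {j : V // (j, a) ∈ E}, S j.1),
          (starRingEnd ℂ) ((gf r.1 s) * ∏ j, g j (r.2 j) (s j))
            * ((gf r.1 t) * ∏ j, g j (r.2 j) (t j)) := by
    unfold Zfac
    refine Finset.sum_congr rfl fun s _ => Finset.sum_congr rfl fun t _ => ?_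
    rw [show ∏ j : {j : V // (j, a) ∈ E}, mv j.1 a j.2 (s j) (t j)
        = ∏ j : {j : V // (j, a) ∈ E}, ∑ r, (starRingEnd ℂ) (g j r (s j)) * g j r (t j) from
      Finset.prod_congr rfl fun j _ => hg j (s j) (t j), rep_pi, hgf s t,
      rep_mul gf (fun (r : ∀ j : {j : V // (j, a) ∈ E}, S j.1) (s) => ∏ j, g j (r j) (s j)) s t]
  rw [hrw]
  exact sum_entries_rep_nonneg _

noncomputable def AF (mf : DeFGMsg E S) (k : V) (c : F) : S k → S k → ℂ :=
  fun s t => ∏ a ∈ univ.filter (fun a : {a : F // (k, a) ∈ E} => (a : F) ≠ c),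
    mf k a.1 a.2 s t

noncomputable def BF
    (f : ∀ a : F, (∀ j : {j : V // (j, a) ∈ E}, S j.1) →
                  (∀ j : {j : V // (j, a) ∈ E}, S j.1) → ℂ)
    (mv : DeFGMsg E S) (k : V) (c : F) (h : (k, c) ∈ E) : S k → S k → ℂ :=
  fun sk stk =>
    ∑ s ∈ univ.filter (fun s : ∀ j : {j : V // (j, c) ∈ E}, S j.1 => s ⟨k, h⟩ = sk),
      ∑ st ∈ univ.filter (fun st : ∀ j : {j : V // (j, c) ∈ E}, S j.1 => st ⟨k, h⟩ = stk),
        f c s st *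
          ∏ j ∈ univ.filter (fun j : {j : V // (j, c) ∈ E} => (j : V) ≠ k),
            mv j.1 c j.2 (s j) (st j)

lemma updMsg_self (m : DeFGMsg E S) (k : V) (c : F) (η : S k → S k → ℂ) (t : ℝ)
    (h' : (k, c) ∈ E) (sj stj : S k) :
    updMsg E S m k c η t k c h' sj stj = m k c h' sj stj + (t : ℂ) * η sj stj := by
  unfold updMsg
  rw [dif_pos ⟨rfl, rfl⟩]
  rfl

lemma updMsg_ne (m : DeFGMsg E S) (k : V) (c : F) (η : S k → S k → ℂ) (t : ℝ)
    {j : V} {a : F} (hne : ¬(j = k ∧ a = c)) (h' : (j, a) ∈ E) :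
    updMsg E S m k c η t j a h' = m j a h' := by
  funext sj stj
  unfold updMsg
  rw [dif_neg hne]

lemma erase_var (k : V) (c : F) (h : (k, c) ∈ E) :
    (univ.erase (⟨c, h⟩ : {a : F // (k, a) ∈ E}))
      = univ.filter (fun a : {a : F // (k, a) ∈ E} => (a : F) ≠ c) := by
  ext a
  simp [Finset.mem_erase, Finset.mem_filter, Ne, Subtype.ext_iff]

lemma erase_fac (k : V) (c : F) (h : (k, c) ∈ E) :
    (univ.erase (⟨k, h⟩ : {j : V // (j, c) ∈ E}))
      = univ.filter (fun j : {j : V // (j, c) ∈ E} => (j : V) ≠ k) := by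
  ext a
  simp [Finset.mem_erase, Finset.mem_filter, Ne, Subtype.ext_iff]

lemma Zvar_split (mf : DeFGMsg E S) (k : V) (c : F) (h : (k, c) ∈ E) (s t : S k) :
    ∏ a : {a : F // (k, a) ∈ E}, mf k a.1 a.2 s t
      = mf k c h s t * AF E S mf k c s t := by
  unfold AF
  rw [← erase_var E k c h]
  exact (Finset.mul_prod_erase univ (fun a : {a : F // (k, a) ∈ E} => mf k a.1 a.2 s t)
    (Finset.mem_univ ⟨c, h⟩)).symm

lemma prodJ_split (mv : DeFGMsg E S) (k : V) (c : F) (h : (k, c) ∈ E)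
    (s t : ∀ j : {j : V // (j, c) ∈ E}, S j.1) :
    ∏ j : {j : V // (j, c) ∈ E}, mv j.1 c j.2 (s j) (t j)
      = mv k c h (s ⟨k, h⟩) (t ⟨k, h⟩) *
          ∏ j ∈ univ.filter (fun j : {j : V // (j, c) ∈ E} => (j : V) ≠ k),
            mv j.1 c j.2 (s j) (t j) := by
  rw [← erase_fac E k c h]
  exact (Finset.mul_prod_erase univ
    (fun j : {j : V // (j, c) ∈ E} => mv j.1 c j.2 (s j) (t j))
    (Finset.mem_univ ⟨k, h⟩)).symm

lemma Zvar_eq (mf : DeFGMsg E S) (k : V) (c : F) (h : (k, c) ∈ E) :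
    Zvar E S mf k = ∑ s, ∑ t, mf k c h s t * AF E S mf k c s t := by
  unfold Zvar
  exact Finset.sum_congr rfl fun s _ => Finset.sum_congr rfl fun t _ =>
    Zvar_split E S mf k c h s t

lemma AF_upd (mf : DeFGMsg E S) (k : V) (c : F) (η : S k → S k → ℂ) (t : ℝ) :
    AF E S (updMsg E S mf k c η t) k c = AF E S mf k c := by
  funext s u
  unfold AF
  refine Finset.prod_congr rfl fun a ha => ?_
  rw [updMsg_ne E S mf k c η t (fun hc => (Finset.mem_filter.mp ha).2 hc.2) a.2]

lemma Zvar_upd (mf : DeFGMsg E S) (k : V) (c : F) (h : (k, c) ∈ E)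
    (η : S k → S k → ℂ) (t : ℝ) :
    Zvar E S (updMsg E S mf k c η t) k
      = Zvar E S mf k + (t : ℂ) * cpair η (AF E S mf k c) := by
  rw [Zvar_eq E S (updMsg E S mf k c η t) k c h, AF_upd,
    Zvar_eq E S mf k c h]
  unfold cpair
  rw [Finset.mul_sum, ← Finset.sum_add_distrib]
  refine Finset.sum_congr rfl fun s _ => ?_
  rw [Finset.mul_sum, ← Finset.sum_add_distrib]
  refine Finset.sum_congr rfl fun u _ => ?_
  rw [updMsg_self]
  ring

lemma Zvar_upd_ne (mf : DeFGMsg E S) (k : V) (c : F) (η : S k → S k → ℂ) (t : ℝ)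
    {j : V} (hj : j ≠ k) :
    Zvar E S (updMsg E S mf k c η t) j = Zvar E S mf j := by
  unfold Zvar
  refine Finset.sum_congr rfl fun s _ => Finset.sum_congr rfl fun u _ =>
    Finset.prod_congr rfl fun a _ => ?_
  rw [updMsg_ne E S mf k c η t (fun hc => hj hc.1) a.2]

lemma Zedge_upd_mf (mv mf : DeFGMsg E S) (k : V) (c : F) (h : (k, c) ∈ E)
    (η : S k → S k → ℂ) (t : ℝ) :
    Zedge E S mv (updMsg E S mf k c η t) k c h
      = Zedge E S mv mf k c h + (t : ℂ) * cpair η (mv k c h) := by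
  unfold Zedge cpair
  rw [Finset.mul_sum, ← Finset.sum_add_distrib]
  refine Finset.sum_congr rfl fun s _ => ?_
  rw [Finset.mul_sum, ← Finset.sum_add_distrib]
  refine Finset.sum_congr rfl fun u _ => ?_
  rw [updMsg_self]
  ring

lemma Zedge_upd_mv (mv mf : DeFGMsg E S) (k : V) (c : F) (h : (k, c) ∈ E)
    (η : S k → S k → ℂ) (t : ℝ) :
    Zedge E S (updMsg E S mv k c η t) mf k c h
      = Zedge E S mv mf k c h + (t : ℂ) * cpair η (mf k c h) := by
  unfold Zedge cpair
  rw [Finset.mul_sum, ← Finset.sum_add_distrib]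
  refine Finset.sum_congr rfl fun s _ => ?_
  rw [Finset.mul_sum, ← Finset.sum_add_distrib]
  refine Finset.sum_congr rfl fun u _ => ?_
  rw [updMsg_self]
  ring

lemma Zedge_upd_mf_ne (mv mf : DeFGMsg E S) (k : V) (c : F) (η : S k → S k → ℂ) (t : ℝ)
    {j : V} {a : F} (hne : ¬(j = k ∧ a = c)) (h' : (j, a) ∈ E) :
    Zedge E S mv (updMsg E S mf k c η t) j a h' = Zedge E S mv mf j a h' := by
  unfold Zedge
  rw [updMsg_ne E S mf k c η t hne h']

lemma Zedge_upd_mv_ne (mv mf : DeFGMsg E S) (k : V) (c : F) (η : S k → S k → ℂ) (t : ℝ)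
    {j : V} {a : F} (hne : ¬(j = k ∧ a = c)) (h' : (j, a) ∈ E) :
    Zedge E S (updMsg E S mv k c η t) mf j a h' = Zedge E S mv mf j a h' := by
  unfold Zedge
  rw [updMsg_ne E S mv k c η t hne h']

lemma Zfac_upd_ne
    (f : ∀ a : F, (∀ j : {j : V // (j, a) ∈ E}, S j.1) →
                  (∀ j : {j : V // (j, a) ∈ E}, S j.1) → ℂ)
    (mv : DeFGMsg E S) (k : V) (c : F) (η : S k → S k → ℂ) (t : ℝ)
    {a : F} (ha : a ≠ c) :
    Zfac E S f (updMsg E S mv k c η t) a = Zfac E S f mv a := by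
  unfold Zfac
  refine Finset.sum_congr rfl fun s _ => Finset.sum_congr rfl fun u _ => ?_
  congr 1
  refine Finset.prod_congr rfl fun j _ => ?_
  rw [updMsg_ne E S mv k c η t (fun hc => ha hc.2) j.2]

lemma fiber_split {n m : Type} [Fintype n] [Fintype m] [DecidableEq n]
    (π : m → n) (G : m → m → ℂ) (w : n → n → ℂ) :
    ∑ s : m, ∑ st : m, w (π s) (π st) * G s st
      = ∑ sk : n, ∑ stk : n, w sk stk *
          ∑ s ∈ univ.filter (fun s => π s = sk),
            ∑ st ∈ univ.filter (fun st => π st = stk), G s st := by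
  have step1 : ∀ sk : n, ∀ s : m,
      ∑ stk : n, w sk stk * ∑ st ∈ univ.filter (fun st => π st = stk), G s st
        = ∑ st : m, w sk (π st) * G s st := by
    intro sk s
    rw [← Finset.sum_fiberwise univ π (fun st => w sk (π st) * G s st)]
    refine Finset.sum_congr rfl fun stk _ => ?_
    rw [Finset.mul_sum]
    refine Finset.sum_congr rfl fun st hst => ?_
    rw [(Finset.mem_filter.mp hst).2]
  symm
  calc ∑ sk : n, ∑ stk : n, w sk stk *
          ∑ s ∈ univ.filter (fun s => π s = sk),
            ∑ st ∈ univ.filter (fun st => π st = stk), G s st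
      = ∑ sk : n, ∑ s ∈ univ.filter (fun s => π s = sk),
          ∑ st : m, w sk (π st) * G s st := by
        refine Finset.sum_congr rfl fun sk _ => ?_
        calc ∑ stk : n, w sk stk *
                ∑ s ∈ univ.filter (fun s => π s = sk),
                  ∑ st ∈ univ.filter (fun st => π st = stk), G s st
            = ∑ stk : n, ∑ s ∈ univ.filter (fun s => π s = sk),
                w sk stk * ∑ st ∈ univ.filter (fun st => π st = stk), G s st :=
              Finset.sum_congr rfl fun stk _ => Finset.mul_sum _ _ _
          _ = ∑ s ∈ univ.filter (fun s => π s = sk),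
                ∑ stk : n, w sk stk * ∑ st ∈ univ.filter (fun st => π st = stk), G s st :=
              Finset.sum_comm
          _ = ∑ s ∈ univ.filter (fun s => π s = sk), ∑ st : m, w sk (π st) * G s st :=
              Finset.sum_congr rfl fun s _ => step1 sk s
    _ = ∑ s : m, ∑ st : m, w (π s) (π st) * G s st := by
        rw [← Finset.sum_fiberwise univ π (fun s => ∑ st : m, w (π s) (π st) * G s st)]
        refine Finset.sum_congr rfl fun sk _ => Finset.sum_congr rfl fun s hs => ?_
        rw [(Finset.mem_filter.mp hs).2]

lemma Zfac_gen
    (f : ∀ a : F, (∀ j : {j : V // (j, a) ∈ E}, S j.1) →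
                  (∀ j : {j : V // (j, a) ∈ E}, S j.1) → ℂ)
    (mv : DeFGMsg E S) (k : V) (c : F) (h : (k, c) ∈ E) (w : S k → S k → ℂ) :
    ∑ s : ∀ j : {j : V // (j, c) ∈ E}, S j.1, ∑ st : ∀ j : {j : V // (j, c) ∈ E}, S j.1,
        f c s st * (w (s ⟨k, h⟩) (st ⟨k, h⟩) *
          ∏ j ∈ univ.filter (fun j : {j : V // (j, c) ∈ E} => (j : V) ≠ k),
            mv j.1 c j.2 (s j) (st j))
      = ∑ sk, ∑ stk, w sk stk * BF E S f mv k c h sk stk := by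
  unfold BF
  rw [← fiber_split (fun s : ∀ j : {j : V // (j, c) ∈ E}, S j.1 => s ⟨k, h⟩)
    (fun s st => f c s st *
      ∏ j ∈ univ.filter (fun j : {j : V // (j, c) ∈ E} => (j : V) ≠ k),
        mv j.1 c j.2 (s j) (st j)) w]
  exact Finset.sum_congr rfl fun s _ => Finset.sum_congr rfl fun st _ => by ring

lemma Zfac_eq
    (f : ∀ a : F, (∀ j : {j : V // (j, a) ∈ E}, S j.1) →
                  (∀ j : {j : V // (j, a) ∈ E}, S j.1) → ℂ)
    (mv : DeFGMsg E S) (k : V) (c : F) (h : (k, c) ∈ E) :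
    Zfac E S f mv c = ∑ sk, ∑ stk, mv k c h sk stk * BF E S f mv k c h sk stk := by
  rw [← Zfac_gen E S f mv k c h (mv k c h)]
  unfold Zfac
  refine Finset.sum_congr rfl fun s _ => Finset.sum_congr rfl fun st _ => ?_
  rw [prodJ_split E S mv k c h s st]

lemma Zfac_upd
    (f : ∀ a : F, (∀ j : {j : V // (j, a) ∈ E}, S j.1) →
                  (∀ j : {j : V // (j, a) ∈ E}, S j.1) → ℂ)
    (mv : DeFGMsg E S) (k : V) (c : F) (h : (k, c) ∈ E) (η : S k → S k → ℂ) (t : ℝ) :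
    Zfac E S f (updMsg E S mv k c η t) c
      = Zfac E S f mv c + (t : ℂ) * cpair η (BF E S f mv k c h) := by
  have key : Zfac E S f (updMsg E S mv k c η t) c
      = ∑ sk, ∑ stk, (mv k c h sk stk + (t : ℂ) * η sk stk) * BF E S f mv k c h sk stk := by
    rw [← Zfac_gen E S f mv k c h (fun a b => mv k c h a b + (t : ℂ) * η a b)]
    unfold Zfac
    refine Finset.sum_congr rfl fun s _ => Finset.sum_congr rfl fun st _ => ?_
    rw [prodJ_split E S (updMsg E S mv k c η t) k c h s st, updMsg_self]
    congr 2
    refine Finset.prod_congr rfl fun j hj => ?_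
    rw [updMsg_ne E S mv k c η t (fun hc => (Finset.mem_filter.mp hj).2 hc.1) j.2]
  rw [key, Zfac_eq E S f mv k c h]
  unfold cpair
  rw [Finset.mul_sum, ← Finset.sum_add_distrib]
  refine Finset.sum_congr rfl fun sk _ => ?_
  rw [Finset.mul_sum, ← Finset.sum_add_distrib]
  refine Finset.sum_congr rfl fun stk _ => ?_
  ring

lemma deriv_mf_iff
    (f : ∀ a : F, (∀ j : {j : V // (j, a) ∈ E}, S j.1) →
                  (∀ j : {j : V // (j, a) ∈ E}, S j.1) → ℂ)
    (mv mf : DeFGMsg E S)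
    (hZe : ∀ (j : V) (a : F) (h : (j, a) ∈ E), Zedge E S mv mf j a h ≠ 0)
    (hZf : ∀ a : F, Zfac E S f mv a ≠ 0) (hZv : ∀ j : V, Zvar E S mf j ≠ 0)
    (k : V) (c : F) (h : (k, c) ∈ E) (η : S k → S k → ℂ) :
    deriv (fun t : ℝ => Zinduced E S f mv (updMsg E S mf k c η t)) 0 = 0
      ↔ cpair η (AF E S mf k c) * Zedge E S mv mf k c h
          = Zvar E S mf k * cpair η (mv k c h) := by
  have hCne : ((∏ a, Zfac E S f mv a) * ∏ j ∈ univ.erase k, Zvar E S mf j) ≠ 0 :=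
    mul_ne_zero (Finset.prod_ne_zero_iff.mpr fun a _ => hZf a)
      (Finset.prod_ne_zero_iff.mpr fun j _ => hZv j)
  have hDne : (∏ e ∈ univ.erase (⟨(k, c), h⟩ : {p : V × F // p ∈ E}),
      Zedge E S mv mf e.1.1 e.1.2 e.2) ≠ 0 :=
    Finset.prod_ne_zero_iff.mpr fun e _ => hZe e.1.1 e.1.2 e.2
  have hfun : (fun t : ℝ => Zinduced E S f mv (updMsg E S mf k c η t))
      = fun t : ℝ =>
        (((∏ a, Zfac E S f mv a) * ∏ j ∈ univ.erase k, Zvar E S mf j) *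
            (Zvar E S mf k + (t : ℂ) * cpair η (AF E S mf k c))) /
          ((∏ e ∈ univ.erase (⟨(k, c), h⟩ : {p : V × F // p ∈ E}),
              Zedge E S mv mf e.1.1 e.1.2 e.2) *
            (Zedge E S mv mf k c h + (t : ℂ) * cpair η (mv k c h))) := by
    funext t
    unfold Zinduced
    have hn : ∏ j : V, Zvar E S (updMsg E S mf k c η t) j
        = (Zvar E S mf k + (t : ℂ) * cpair η (AF E S mf k c)) *
            ∏ j ∈ univ.erase k, Zvar E S mf j := by
      rw [← Finset.mul_prod_erase univ _ (Finset.mem_univ k), Zvar_upd E S mf k c h η t]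
      congr 1
      exact Finset.prod_congr rfl fun j hj =>
        Zvar_upd_ne E S mf k c η t (Finset.mem_erase.mp hj).1
    have hd : ∏ e : {p : V × F // p ∈ E},
          Zedge E S mv (updMsg E S mf k c η t) e.1.1 e.1.2 e.2
        = (Zedge E S mv mf k c h + (t : ℂ) * cpair η (mv k c h)) *
            ∏ e ∈ univ.erase (⟨(k, c), h⟩ : {p : V × F // p ∈ E}),
              Zedge E S mv mf e.1.1 e.1.2 e.2 := by
      rw [← Finset.mul_prod_erase univ _
        (Finset.mem_univ (⟨(k, c), h⟩ : {p : V × F // p ∈ E})),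
        Zedge_upd_mf E S mv mf k c h η t]
      congr 1
      refine Finset.prod_congr rfl fun e he => Zedge_upd_mf_ne E S mv mf k c η t ?_ e.2
      intro hc
      exact (Finset.mem_erase.mp he).1 (Subtype.ext (Prod.ext hc.1 hc.2))
    rw [hn, hd]
    ring
  rw [hfun, deriv_ratio _ _ _ _ _ _ (hZe k c h) hDne]
  constructor
  · intro h0
    rcases div_eq_zero_iff.mp h0 with h1 | h1
    · have h2 : (((∏ a, Zfac E S f mv a) * ∏ j ∈ univ.erase k, Zvar E S mf j) *
          (∏ e ∈ univ.erase (⟨(k, c), h⟩ : {p : V × F // p ∈ E}),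
              Zedge E S mv mf e.1.1 e.1.2 e.2)) *
          (cpair η (AF E S mf k c) * Zedge E S mv mf k c h
            - Zvar E S mf k * cpair η (mv k c h)) = 0 := by
        linear_combination h1
      rcases mul_eq_zero.mp h2 with h3 | h3
      · exact absurd h3 (mul_ne_zero hCne hDne)
      · exact sub_eq_zero.mp h3
    · exact absurd h1 (pow_ne_zero 2 (mul_ne_zero hDne (hZe k c h)))
  · intro heq
    apply div_eq_zero_iff.mpr
    left
    linear_combination (((∏ a, Zfac E S f mv a) * ∏ j ∈ univ.erase k, Zvar E S mf j) *
      (∏ e ∈ univ.erase (⟨(k, c), h⟩ : {p : V × F // p ∈ E}),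
          Zedge E S mv mf e.1.1 e.1.2 e.2)) * heq

lemma deriv_mv_iff
    (f : ∀ a : F, (∀ j : {j : V // (j, a) ∈ E}, S j.1) →
                  (∀ j : {j : V // (j, a) ∈ E}, S j.1) → ℂ)
    (mv mf : DeFGMsg E S)
    (hZe : ∀ (j : V) (a : F) (h : (j, a) ∈ E), Zedge E S mv mf j a h ≠ 0)
    (hZf : ∀ a : F, Zfac E S f mv a ≠ 0) (hZv : ∀ j : V, Zvar E S mf j ≠ 0)
    (k : V) (c : F) (h : (k, c) ∈ E) (η : S k → S k → ℂ) :
    deriv (fun t : ℝ => Zinduced E S f (updMsg E S mv k c η t) mf) 0 = 0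
      ↔ cpair η (BF E S f mv k c h) * Zedge E S mv mf k c h
          = Zfac E S f mv c * cpair η (mf k c h) := by
  have hCne : ((∏ a ∈ univ.erase c, Zfac E S f mv a) * ∏ j, Zvar E S mf j) ≠ 0 :=
    mul_ne_zero (Finset.prod_ne_zero_iff.mpr fun a _ => hZf a)
      (Finset.prod_ne_zero_iff.mpr fun j _ => hZv j)
  have hDne : (∏ e ∈ univ.erase (⟨(k, c), h⟩ : {p : V × F // p ∈ E}),
      Zedge E S mv mf e.1.1 e.1.2 e.2) ≠ 0 :=
    Finset.prod_ne_zero_iff.mpr fun e _ => hZe e.1.1 e.1.2 e.2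
  have hfun : (fun t : ℝ => Zinduced E S f (updMsg E S mv k c η t) mf)
      = fun t : ℝ =>
        (((∏ a ∈ univ.erase c, Zfac E S f mv a) * ∏ j, Zvar E S mf j) *
            (Zfac E S f mv c + (t : ℂ) * cpair η (BF E S f mv k c h))) /
          ((∏ e ∈ univ.erase (⟨(k, c), h⟩ : {p : V × F // p ∈ E}),
              Zedge E S mv mf e.1.1 e.1.2 e.2) *
            (Zedge E S mv mf k c h + (t : ℂ) * cpair η (mf k c h))) := by
    funext t
    unfold Zinduced
    have hn : ∏ a : F, Zfac E S f (updMsg E S mv k c η t) a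
        = (Zfac E S f mv c + (t : ℂ) * cpair η (BF E S f mv k c h)) *
            ∏ a ∈ univ.erase c, Zfac E S f mv a := by
      rw [← Finset.mul_prod_erase univ _ (Finset.mem_univ c), Zfac_upd E S f mv k c h η t]
      congr 1
      exact Finset.prod_congr rfl fun a ha =>
        Zfac_upd_ne E S f mv k c η t (Finset.mem_erase.mp ha).1
    have hd : ∏ e : {p : V × F // p ∈ E},
          Zedge E S (updMsg E S mv k c η t) mf e.1.1 e.1.2 e.2
        = (Zedge E S mv mf k c h + (t : ℂ) * cpair η (mf k c h)) *
            ∏ e ∈ univ.erase (⟨(k, c), h⟩ : {p : V × F // p ∈ E}),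
              Zedge E S mv mf e.1.1 e.1.2 e.2 := by
      rw [← Finset.mul_prod_erase univ _
        (Finset.mem_univ (⟨(k, c), h⟩ : {p : V × F // p ∈ E})),
        Zedge_upd_mv E S mv mf k c h η t]
      congr 1
      refine Finset.prod_congr rfl fun e he => Zedge_upd_mv_ne E S mv mf k c η t ?_ e.2
      intro hc
      exact (Finset.mem_erase.mp he).1 (Subtype.ext (Prod.ext hc.1 hc.2))
    rw [hn, hd]
    ring
  rw [hfun, deriv_ratio _ _ _ _ _ _ (hZe k c h) hDne]
  constructor
  · intro h0
    rcases div_eq_zero_iff.mp h0 with h1 | h1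
    · have h2 : (((∏ a ∈ univ.erase c, Zfac E S f mv a) * ∏ j, Zvar E S mf j) *
          (∏ e ∈ univ.erase (⟨(k, c), h⟩ : {p : V × F // p ∈ E}),
              Zedge E S mv mf e.1.1 e.1.2 e.2)) *
          (cpair η (BF E S f mv k c h) * Zedge E S mv mf k c h
            - Zfac E S f mv c * cpair η (mf k c h)) = 0 := by
        linear_combination h1
      rcases mul_eq_zero.mp h2 with h3 | h3
      · exact absurd h3 (mul_ne_zero hCne hDne)
      · exact sub_eq_zero.mp h3
    · exact absurd h1 (pow_ne_zero 2 (mul_ne_zero hDne (hZe k c h)))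
  · intro heq
    apply div_eq_zero_iff.mpr
    left
    linear_combination (((∏ a ∈ univ.erase c, Zfac E S f mv a) * ∏ j, Zvar E S mf j) *
      (∏ e ∈ univ.erase (⟨(k, c), h⟩ : {p : V × F // p ∈ E}),
          Zedge E S mv mf e.1.1 e.1.2 e.2)) * heq

/-- For a DeFG without classical variables and PSD messages:
(i) if all edge partition sums are nonzero, the induced partition sum is a nonnegative
real number; (ii) if moreover all factor and variable partition sums are nonzero, then the
vanishing of the directional derivatives of `Z_induced` along all PSD directions (at every
single message) is equivalent to the messages being a BP fixed point. -/
theorem stmt7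
    (f : ∀ a : F, (∀ j : {j : V // (j, a) ∈ E}, S j.1) →
                  (∀ j : {j : V // (j, a) ∈ E}, S j.1) → ℂ)
    (hPSD : ∀ a : F, Matrix.PosSemidef (Matrix.of fun s st => f a s st))
    (mv mf : DeFGMsg E S)
    (hmv : ∀ (j : V) (a : F) (h : (j, a) ∈ E), Matrix.PosSemidef (Matrix.of (mv j a h)))
    (hmf : ∀ (j : V) (a : F) (h : (j, a) ∈ E), Matrix.PosSemidef (Matrix.of (mf j a h))) :
    ((∀ (j : V) (a : F) (h : (j, a) ∈ E), Zedge E S mv mf j a h ≠ 0) →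
      (Zinduced E S f mv mf).im = 0 ∧ 0 ≤ (Zinduced E S f mv mf).re) ∧
    ((∀ (j : V) (a : F) (h : (j, a) ∈ E), Zedge E S mv mf j a h ≠ 0) →
     (∀ a : F, Zfac E S f mv a ≠ 0) → (∀ j : V, Zvar E S mf j ≠ 0) →
      ((∀ (k : V) (c : F) (h : (k, c) ∈ E) (η : S k → S k → ℂ),
          Matrix.PosSemidef (Matrix.of η) →
            deriv (fun t : ℝ => Zinduced E S f mv (updMsg E S mf k c η t)) 0 = 0 ∧
            deriv (fun t : ℝ => Zinduced E S f (updMsg E S mv k c η t) mf) 0 = 0)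
        ↔
       (∀ (k : V) (c : F) (h : (k, c) ∈ E),
          (∃ γ : ℝ, 0 < γ ∧ ∀ sk stk : S k,
            mv k c h sk stk = (γ : ℂ) *
              ∏ a ∈ univ.filter (fun a : {a : F // (k, a) ∈ E} => (a : F) ≠ c),
                mf k a.1 a.2 sk stk) ∧
          (∃ δ : ℝ, 0 < δ ∧ ∀ sk stk : S k,
            mf k c h sk stk = (δ : ℂ) *
              ∑ s ∈ univ.filter
                  (fun s : ∀ j : {j : V // (j, c) ∈ E}, S j.1 => s ⟨k, h⟩ = sk),
                ∑ st ∈ univ.filter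
                    (fun st : ∀ j : {j : V // (j, c) ∈ E}, S j.1 => st ⟨k, h⟩ = stk),
                  f c s st *
                    ∏ j ∈ univ.filter (fun j : {j : V // (j, c) ∈ E} => (j : V) ≠ k),
                      mv j.1 c j.2 (s j) (st j))))) := by
  constructor
  · intro hZe
    have h1 : 0 ≤ Zinduced E S f mv mf := by
      unfold Zinduced
      exact cdiv_nonneg
        (cmul_nonneg (cprod_nonneg fun a _ => Zfac_nonneg E S f hPSD mv hmv a)
          (cprod_nonneg fun j _ => Zvar_nonneg E S mf hmf j))
        (cprod_nonneg fun e _ => Zedge_nonneg E S mv mf hmv hmf e.1.1 e.1.2 e.2)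
    exact ⟨(Complex.nonneg_iff.mp h1).2.symm, (Complex.nonneg_iff.mp h1).1⟩
  · intro hZe hZf hZv
    constructor
    · intro hst k c h
      have hZk0 : 0 ≤ Zvar E S mf k := Zvar_nonneg E S mf hmf k
      have hZkc0 : 0 ≤ Zedge E S mv mf k c h := Zedge_nonneg E S mv mf hmv hmf k c h
      have hZc0 : 0 ≤ Zfac E S f mv c := Zfac_nonneg E S f hPSD mv hmv c
      constructor
      · have hd1 : ∀ η : S k → S k → ℂ, Matrix.PosSemidef (Matrix.of η) →
            cpair η (AF E S mf k c) * Zedge E S mv mf k c h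
              = Zvar E S mf k * cpair η (mv k c h) :=
          fun η hη => (deriv_mf_iff E S f mv mf hZe hZf hZv k c h η).mp (hst k c h η hη).1
        have hzero := cpair_forall_zero (X := fun s t =>
            Zedge E S mv mf k c h * AF E S mf k c s t - Zvar E S mf k * mv k c h s t)
          (fun η hη => by
            rw [cpair_lin]
            linear_combination hd1 η hη)
        refine ⟨(Zedge E S mv mf k c h).re / (Zvar E S mf k).re,
          div_pos (cpos_re hZkc0 (hZe k c h)) (cpos_re hZk0 (hZv k)), fun sk stk => ?_⟩
        have hcast : (((Zedge E S mv mf k c h).re / (Zvar E S mf k).re : ℝ) : ℂ)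
            = Zedge E S mv mf k c h / Zvar E S mf k := by
          rw [Complex.ofReal_div, ← c_eq_re hZkc0, ← c_eq_re hZk0]
        rw [hcast]
        show mv k c h sk stk
          = Zedge E S mv mf k c h / Zvar E S mf k * AF E S mf k c sk stk
        have h0 := hzero sk stk
        have hZkne := hZv k
        field_simp
        linear_combination (-1 : ℂ) * h0
      · have hd2 : ∀ η : S k → S k → ℂ, Matrix.PosSemidef (Matrix.of η) →
            cpair η (BF E S f mv k c h) * Zedge E S mv mf k c h
              = Zfac E S f mv c * cpair η (mf k c h) :=
          fun η hη => (deriv_mv_iff E S f mv mf hZe hZf hZv k c h η).mp (hst k c h η hη).2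
        have hzero := cpair_forall_zero (X := fun s t =>
            Zedge E S mv mf k c h * BF E S f mv k c h s t - Zfac E S f mv c * mf k c h s t)
          (fun η hη => by
            rw [cpair_lin]
            linear_combination hd2 η hη)
        refine ⟨(Zedge E S mv mf k c h).re / (Zfac E S f mv c).re,
          div_pos (cpos_re hZkc0 (hZe k c h)) (cpos_re hZc0 (hZf c)), fun sk stk => ?_⟩
        have hcast : (((Zedge E S mv mf k c h).re / (Zfac E S f mv c).re : ℝ) : ℂ)
            = Zedge E S mv mf k c h / Zfac E S f mv c := by
          rw [Complex.ofReal_div, ← c_eq_re hZkc0, ← c_eq_re hZc0]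
        rw [hcast]
        show mf k c h sk stk
          = Zedge E S mv mf k c h / Zfac E S f mv c * BF E S f mv k c h sk stk
        have h0 := hzero sk stk
        have hZcne := hZf c
        field_simp
        linear_combination (-1 : ℂ) * h0
    · intro hBP k c h η hη
      obtain ⟨⟨γ, hγpos, hγ⟩, δ, hδpos, hδ⟩ := hBP k c h
      have hmveq : mv k c h = fun sk stk => (γ : ℂ) * AF E S mf k c sk stk := by
        funext sk stk
        exact hγ sk stk
      have hmfeq : mf k c h = fun sk stk => (δ : ℂ) * BF E S f mv k c h sk stk := by
        funext sk stk
        exact hδ sk stk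
      constructor
      · rw [deriv_mf_iff E S f mv mf hZe hZf hZv k c h η]
        have hZkc : Zedge E S mv mf k c h = (γ : ℂ) * Zvar E S mf k := by
          unfold Zedge
          rw [Zvar_eq E S mf k c h, Finset.mul_sum]
          refine Finset.sum_congr rfl fun s _ => ?_
          rw [Finset.mul_sum]
          refine Finset.sum_congr rfl fun t _ => ?_
          rw [hmveq]
          ring
        have hcp : cpair η (mv k c h) = (γ : ℂ) * cpair η (AF E S mf k c) := by
          rw [hmveq]
          unfold cpair
          rw [Finset.mul_sum]
          refine Finset.sum_congr rfl fun s _ => ?_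
          rw [Finset.mul_sum]
          refine Finset.sum_congr rfl fun t _ => ?_
          ring
        rw [hZkc, hcp]
        ring
      · rw [deriv_mv_iff E S f mv mf hZe hZf hZv k c h η]
        have hZkc : Zedge E S mv mf k c h = (δ : ℂ) * Zfac E S f mv c := by
          unfold Zedge
          rw [Zfac_eq E S f mv k c h, Finset.mul_sum]
          refine Finset.sum_congr rfl fun s _ => ?_
          rw [Finset.mul_sum]
          refine Finset.sum_congr rfl fun t _ => ?_
          rw [hmfeq]
          ring
        have hcp : cpair η (mf k c h) = (δ : ℂ) * cpair η (BF E S f mv k c h) := by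
          rw [hmfeq]
          unfold cpair
          rw [Finset.mul_sum]
          refine Finset.sum_congr rfl fun s _ => ?_
          rw [Finset.mul_sum]
          refine Finset.sum_congr rfl fun t _ => ?_
          ring
        rw [hZkc, hcp]
        ring

end
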